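/- Assume s ≥ 1. Let α β : ℂ and let ψ := (α/√2) • (|0^r, 0^s⟩ + |1^r, 1^s⟩) + (β/√2) • (|2^r, 2^s⟩ + |3^r, 3^s⟩) be the GHZ-like encoding of the qubit state α|0⟩ + β|1⟩ on all r + s qudits. Then for every complex matrix X indexed by (Fin r → Fin 4): trace((X ⊗ 1) * |ψ⟩⟨ψ|) = trace(X * ρ), where ρ := ((‖α‖² : ℂ)/2) • (|0^r⟩⟨0^r| + |1^r⟩⟨1^r|) + ((‖β‖² : ℂ)/2) • (|2^r⟩⟨2^r| + |3^r⟩⟨3^r|). (The reduced state of a larger GHZ-like encoding on a proper sub-block of its qudits is the mixed state ρ.) -/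

import Mathlib

open Matrix Kronecker

/-- Standard basis vector of a single block of `q` qudits, supported at the
constant function `fun _ => u`. -/
def basisVec (q : ℕ) (u : Fin 4) : (Fin q → Fin 4) → ℂ :=
  fun x => if x = (fun _ => u) then 1 else 0

/-- Standard basis vector `|u^r, v^s⟩` of the two-block system, supported at
the pair of constant functions. -/
def basisVec2 (r s : ℕ) (u v : Fin 4) : ((Fin r → Fin 4) × (Fin s → Fin 4)) → ℂ :=
  fun x => if x = ((fun _ => u), (fun _ => v)) then 1 else 0

/-- The GHZ-like encoding of `α|0⟩ + β|1⟩` on all `r + s` qudits. -/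
noncomputable def ghzEnc (r s : ℕ) (α β : ℂ) : ((Fin r → Fin 4) × (Fin s → Fin 4)) → ℂ :=
  (α / ((Real.sqrt 2 : ℝ) : ℂ)) • (basisVec2 r s 0 0 + basisVec2 r s 1 1)
    + (β / ((Real.sqrt 2 : ℝ) : ℂ)) • (basisVec2 r s 2 2 + basisVec2 r s 3 3)

lemma trace_mul_vmv {n : Type*} [Fintype n] (M : Matrix n n ℂ) (x w : n → ℂ) :
    (M * vecMulVec x w).trace = w ⬝ᵥ M.mulVec x := by
  simp only [trace, Matrix.mul_apply, vecMulVec_apply, diag_apply, dotProduct, mulVec,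
    dotProduct, Finset.mul_sum]
  congr 1; ext i; congr 1; ext j
  ring

lemma dot_ind {n : Type*} [Fintype n] [DecidableEq n] (p : n) (f : n → ℂ) :
    star (fun x => if x = p then (1:ℂ) else 0) ⬝ᵥ f = f p := by
  simp [dotProduct, Pi.star_apply, apply_ite (star : ℂ → ℂ), ite_mul]

lemma mv_ind {m n : Type*} [Fintype n] [DecidableEq n] (M : Matrix m n ℂ) (p : n) :
    M.mulVec (fun x => if x = p then (1:ℂ) else 0) = fun i => M i p := by
  ext i
  simp [mulVec, dotProduct, mul_ite]


lemma dot2 {r s : ℕ} (u v : Fin 4) (f : ((Fin r → Fin 4) × (Fin s → Fin 4)) → ℂ) :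
    star (basisVec2 r s u v) ⬝ᵥ f = f ((fun _ => u), (fun _ => v)) := by
  unfold basisVec2; exact dot_ind _ f

lemma mv2 {r s : ℕ} (u v : Fin 4)
    (M : Matrix ((Fin r → Fin 4) × (Fin s → Fin 4)) ((Fin r → Fin 4) × (Fin s → Fin 4)) ℂ) :
    M.mulVec (basisVec2 r s u v) = fun i => M i ((fun _ => u), (fun _ => v)) := by
  unfold basisVec2; exact mv_ind M _

lemma dot1 {r : ℕ} (u : Fin 4) (f : (Fin r → Fin 4) → ℂ) :
    star (basisVec r u) ⬝ᵥ f = f (fun _ => u) := by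
  unfold basisVec; exact dot_ind _ f

lemma mv1 {r : ℕ} (u : Fin 4) (M : Matrix (Fin r → Fin 4) (Fin r → Fin 4) ℂ) :
    M.mulVec (basisVec r u) = fun i => M i (fun _ => u) := by
  unfold basisVec; exact mv_ind M _

theorem reduced_state_of_ghz (r s : ℕ) (hs : 1 ≤ s) (α β : ℂ)
    (X : Matrix (Fin r → Fin 4) (Fin r → Fin 4) ℂ) :
    ((X ⊗ₖ (1 : Matrix (Fin s → Fin 4) (Fin s → Fin 4) ℂ)) *
        vecMulVec (ghzEnc r s α β) (star (ghzEnc r s α β))).trace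
    = (X *
        ((((‖α‖^2 : ℝ) : ℂ)/2) • (vecMulVec (basisVec r 0) (star (basisVec r 0))
            + vecMulVec (basisVec r 1) (star (basisVec r 1)))
          + (((‖β‖^2 : ℝ) : ℂ)/2) • (vecMulVec (basisVec r 2) (star (basisVec r 2))
            + vecMulVec (basisVec r 3) (star (basisVec r 3))))).trace := by
  have hv : ∀ u v : Fin 4, ((fun _ => u : Fin s → Fin 4) = fun _ => v) ↔ u = v := by
    intro u v
    constructor
    · intro h; exact congrFun h ⟨0, hs⟩
    · rintro rfl; rfl
  have h2 : ((Real.sqrt 2 : ℝ) : ℂ) * ((Real.sqrt 2 : ℝ) : ℂ) = 2 := by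
    norm_cast
    exact Real.mul_self_sqrt (by norm_num)
  have ha : star α * α = ((‖α‖^2 : ℝ) : ℂ) := by
    rw [Complex.sq_norm, Complex.normSq_eq_conj_mul_self]; rfl
  have hb : star β * β = ((‖β‖^2 : ℝ) : ℂ) := by
    rw [Complex.sq_norm, Complex.normSq_eq_conj_mul_self]; rfl
  simp only [trace_mul_vmv, Matrix.mul_add, Matrix.mul_smul, trace_add, trace_smul,
    smul_eq_mul]
  simp only [ghzEnc, mulVec_add, mulVec_smul, mv2, mv1,
    star_add, star_smul, add_dotProduct, smul_dotProduct, dotProduct_add,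
    dotProduct_smul, dot2, dot1,
    Pi.add_apply, Pi.smul_apply, smul_eq_mul, kroneckerMap_apply, one_apply, hv]
  have hne : ((Real.sqrt 2 : ℝ) : ℂ) ≠ 0 := by
    simpa using Real.sqrt_ne_zero'.2 (by norm_num : (0:ℝ) < 2)
  have hsr : star ((Real.sqrt 2 : ℝ) : ℂ) = ((Real.sqrt 2 : ℝ) : ℂ) := by
    simp [RCLike.star_def, Complex.conj_ofReal]
  simp only [show ((1:Fin 4) = 0) = False by decide, show ((2:Fin 4) = 0) = False by decide,
    show ((3:Fin 4) = 0) = False by decide, show ((0:Fin 4) = 1) = False by decide,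
    show ((2:Fin 4) = 1) = False by decide, show ((3:Fin 4) = 1) = False by decide,
    show ((0:Fin 4) = 2) = False by decide, show ((1:Fin 4) = 2) = False by decide,
    show ((3:Fin 4) = 2) = False by decide, show ((0:Fin 4) = 3) = False by decide,
    show ((1:Fin 4) = 3) = False by decide, show ((2:Fin 4) = 3) = False by decide,
    if_true, if_false, mul_one, mul_zero, add_zero, zero_add, star_div₀, hsr]
  rw [← ha, ← hb]
  field_simp
  ring_nf
  rw [show ((Real.sqrt 2 : ℝ) : ℂ)^2 = 2 by rw [sq]; exact_mod_cast h2]
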